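/- If a bitopological space (X, τ₁, τ₂) is (i,j)-nodec and the set of τⱼ-isolated points of X is τᵢ-dense in X, then (X, τ₁, τ₂) is an (i,j)-I-space. -/

import Mathlib

theorem stmt12 {X : Type*} (ti tj : TopologicalSpace X)
    (hnodec : ∀ A : Set X, @interior X ti (@closure X tj A) = ∅ →
      @IsClosed X tj A ∧ ∀ x ∈ A, ∃ U : Set X, @IsOpen X ti U ∧ U ∩ A = {x})
    (hdense : @closure X ti {x : X | @IsOpen X tj ({x} : Set X)} = Set.univ) :
    @IsClosed X tj {x : X | ¬ @IsOpen X tj ({x} : Set X)} ∧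
      ∀ x ∈ {x : X | ¬ @IsOpen X tj ({x} : Set X)},
        ∃ U : Set X, @IsOpen X ti U ∧ U ∩ {x : X | ¬ @IsOpen X tj ({x} : Set X)} = {x} := by
  apply hnodec
  rw [Set.eq_empty_iff_forall_notMem]
  intro x hx
  have hxo : @IsOpen X ti
      (@interior X ti (@closure X tj {x : X | ¬ @IsOpen X tj ({x} : Set X)})) :=
    @isOpen_interior X ti _
  have hxc : x ∈ @closure X ti {x : X | @IsOpen X tj ({x} : Set X)} := by
    rw [hdense]; trivial
  rw [@mem_closure_iff X ti] at hxc
  obtain ⟨y, hyU, hyI⟩ := hxc _ hxo hx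
  have hyC : y ∈ @closure X tj {x : X | ¬ @IsOpen X tj ({x} : Set X)} :=
    @interior_subset X ti _ _ hyU
  rw [@mem_closure_iff X tj] at hyC
  obtain ⟨z, hz1, hz2⟩ := hyC _ hyI (Set.mem_singleton y)
  rw [Set.mem_singleton_iff] at hz1
  exact hz2 (hz1 ▸ hyI)
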